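/- If (x, y) solves the SIRv model x' = -xy - νx, y' = xy - γy with ν > 0, x, y > 0, and H⁰ denotes the (constant) value of the conserved quantity H = x + y - γ·log x + ν·log y, then y(t)/ν · exp(y(t)/ν) = (1/ν)·x(t)^{γ/ν}·exp((H⁰ - x(t))/ν) for all t; i.e., y/ν lies on the Lambert curve w·e^w = z with z = (1/ν)·x^{γ/ν}·e^{(H⁰-x)/ν}. -/

import Mathlib

theorem sirv_lambert_curve
    (γ ν : ℝ) (hν : 0 < ν) (x y : ℝ → ℝ)
    (hxpos : ∀ t, 0 < x t) (hypos : ∀ t, 0 < y t)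
    (hx : ∀ t, HasDerivAt x (-(x t) * y t - ν * x t) t)
    (hy : ∀ t, HasDerivAt y (x t * y t - γ * y t) t)
    (H0 : ℝ)
    (hH0 : H0 = x 0 + y 0 - γ * Real.log (x 0) + ν * Real.log (y 0)) :
    ∀ t, y t / ν * Real.exp (y t / ν) =
      (1 / ν) * (x t) ^ (γ / ν) * Real.exp ((H0 - x t) / ν) := by
  set H : ℝ → ℝ := fun u => x u + y u - γ * Real.log (x u) + ν * Real.log (y u) with hH
  have hHd : ∀ s, HasDerivAt H 0 s := by
    intro s
    have hlx := (hx s).log (ne_of_gt (hxpos s))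
    have hly := (hy s).log (ne_of_gt (hypos s))
    have h := (((hx s).add (hy s)).sub (hlx.const_mul γ)).add (hly.const_mul ν)
    refine (show HasDerivAt H _ s from h).congr_deriv ?_
    have hx0 := (hxpos s).ne'
    have hy0 := (hypos s).ne'
    field_simp
    ring
  have hconst : ∀ s, H s = H0 := by
    intro s
    have := is_const_of_deriv_eq_zero (f := H)
      (fun u => (hHd u).differentiableAt) (fun u => (hHd u).deriv) s 0
    rw [this, hH0]
  intro t
  have hHt := hconst t
  have hxt := hxpos t
  have hyt := hypos t
  rw [Real.rpow_def_of_pos hxt]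
  rw [show (H0 - x t) / ν = y t / ν + Real.log (y t) - Real.log (x t) * (γ / ν) by
    rw [← hHt]; field_simp; ring]
  rw [show y t / ν + Real.log (y t) - Real.log (x t) * (γ / ν)
      = Real.log (y t) + (y t / ν - Real.log (x t) * (γ / ν)) by ring,
    Real.exp_add, Real.exp_log hyt, Real.exp_sub]
  field_simp
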